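/- Let α be a real number with α ∉ ℤ. The sequence (c^{(n)})_{n=0}^∞ is a Schauder basis of c₀(Δ^(α)): every x ∈ c₀(Δ^(α)) has the representation x = ∑_{n=0}^∞ (Δ^(α)x)_n · c^{(n)}, with the series converging in the norm ‖x‖ = sup_m |(Δ^(α)x)_m|, and this is the unique representation of x as a norm-convergent series ∑_n λ_n c^{(n)} with real scalars λ_n. -/
import Mathlib


open Filter Finset Topology

/-- The fractional difference matrix `Δ^(α)`. -/
noncomputable def fracDelta (α : ℝ) (n k : ℕ) : ℝ :=
  if k ≤ n then
    (-1 : ℝ) ^ (n - k) * Real.Gamma (α + 1) /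
      ((Nat.factorial (n - k) : ℝ) * Real.Gamma (α - n + k + 1))
  else 0

/-- `(Δ^(α)x)_n = ∑_{k=0}^n Δ^(α)_{nk} x_k`. -/
noncomputable def fracDeltaSeq (α : ℝ) (x : ℕ → ℝ) (n : ℕ) : ℝ :=
  ∑ k ∈ Finset.range (n + 1), fracDelta α n k * x k

/-- Membership in `c₀(Δ^(α))`. -/
def memC0Delta (α : ℝ) (x : ℕ → ℝ) : Prop :=
  Tendsto (fracDeltaSeq α x) atTop (nhds 0)

/-- The norm `‖x‖ = sup_m |(Δ^(α)x)_m|`. -/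
noncomputable def deltaNorm (α : ℝ) (x : ℕ → ℝ) : ℝ :=
  ⨆ m, |fracDeltaSeq α x m|

/-- The basis sequence `c^{(n)}`: `c^{(n)}_k = 0` for `k < n` and
`c^{(n)}_k = (−1)^{k−n} Γ(−α+1)/((k−n)!·Γ(−α+n−k+1))` for `k ≥ n`;
it is the `n`-th column of `Δ^(−α)`. -/
noncomputable def cBasis (α : ℝ) (n k : ℕ) : ℝ := fracDelta (-α) k n


lemma gamma_ratio (α : ℝ) (hα : ∀ m : ℤ, α ≠ (m : ℝ)) (m : ℕ) :
    Real.Gamma (α + 1) = (descPochhammer ℤ m).smeval α * Real.Gamma (α - m + 1) := by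
  induction m with
  | zero => simp
  | succ m ih =>
      have hne : α - m ≠ 0 := by
        intro h
        exact hα m (by push_cast; linarith)
      have h1 : Real.Gamma (α - m + 1) = (α - m) * Real.Gamma (α - m) := Real.Gamma_add_one hne
      have h2 : (descPochhammer ℤ (m+1)).smeval α
          = (descPochhammer ℤ m).smeval α * (α - m) := by
        rw [descPochhammer_succ_right]
        simp [Polynomial.smeval_mul, Polynomial.smeval_sub, Polynomial.smeval_X,
          Polynomial.smeval_natCast]
      rw [h2]
      have hc : α - ((m:ℕ)+1 : ℕ) + 1 = α - m := by push_cast; ring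
      rw [hc, ih, h1]
      ring

lemma gammaNe (α : ℝ) (hα : ∀ m : ℤ, α ≠ (m : ℝ)) (m : ℕ) :
    Real.Gamma (α - m + 1) ≠ 0 := by
  apply Real.Gamma_ne_zero
  intro j h
  exact hα (m - 1 - j) (by push_cast; linarith)

lemma fracDelta_eq (α : ℝ) (hα : ∀ m : ℤ, α ≠ (m : ℝ)) {n k : ℕ} (h : k ≤ n) :
    fracDelta α n k = (-1 : ℝ) ^ (n - k) * Ring.choose α (n - k) := by
  set m := n - k with hm
  have hc : α - n + k = α - m := by
    rw [hm, Nat.cast_sub h]; ring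
  rw [fracDelta, if_pos h, hc, gamma_ratio α hα m,
    Ring.descPochhammer_eq_factorial_smul_choose]
  have hΓ := gammaNe α hα m
  have hf : (Nat.factorial m : ℝ) ≠ 0 := Nat.cast_ne_zero.mpr (Nat.factorial_ne_zero m)
  rw [nsmul_eq_mul]
  field_simp
  ring

lemma vandermonde_zero (α : ℝ) (N : ℕ) :
    ∑ i ∈ Finset.range (N+1), Ring.choose α i * Ring.choose (-α) (N - i)
      = if N = 0 then 1 else 0 := by
  have h := Ring.add_choose_eq (R := ℝ) (r := α) (s := -α) N (Commute.all _ _)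
  rw [add_neg_cancel, Ring.choose_zero_ite] at h
  rw [h, Finset.Nat.sum_antidiagonal_eq_sum_range_succ_mk]

lemma fracDelta_zero_of_lt (α : ℝ) {n k : ℕ} (h : n < k) : fracDelta α n k = 0 := by
  rw [fracDelta, if_neg (by omega)]

lemma delta_cBasis (α : ℝ) (hα : ∀ m : ℤ, α ≠ (m : ℝ)) (n m : ℕ) :
    fracDeltaSeq α (cBasis α n) m = if m = n then 1 else 0 := by
  have hα' : ∀ j : ℤ, -α ≠ (j : ℝ) := by
    intro j h; exact hα (-j) (by push_cast; linarith)
  unfold fracDeltaSeq cBasis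
  by_cases hmn : m < n
  · rw [if_neg (by omega)]
    apply Finset.sum_eq_zero
    intro k hk
    rw [Finset.mem_range] at hk
    rw [fracDelta_zero_of_lt (-α) (by omega), mul_zero]
  · push_neg at hmn
    set N := m - n with hN
    have key : ∀ k ∈ Finset.range (m+1), k ∉ Finset.Ico n (m+1) →
        fracDelta α m k * fracDelta (-α) k n = 0 := by
      intro k hk hk'
      rw [Finset.mem_range] at hk
      rw [Finset.mem_Ico] at hk'
      have : k < n := by omega
      rw [fracDelta_zero_of_lt (-α) this, mul_zero]
    rw [← Finset.sum_subset (by rw [Finset.range_eq_Ico]; exact Finset.Ico_subset_Ico (by omega) le_rfl) key]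
    rw [Finset.sum_Ico_eq_sum_range]
    have hrange : m + 1 - n = N + 1 := by omega
    rw [hrange]
    have step : ∀ i ∈ Finset.range (N+1),
        fracDelta α m (n+i) * fracDelta (-α) (n+i) n
          = (-1:ℝ)^N * (Ring.choose α (N - i) * Ring.choose (-α) i) := by
      intro i hi
      rw [Finset.mem_range] at hi
      have h1 : n + i ≤ m := by omega
      have h2 : n ≤ n + i := by omega
      rw [fracDelta_eq α hα h1, fracDelta_eq (-α) hα' h2]
      have e1 : m - (n+i) = N - i := by omega
      have e2 : n + i - n = i := by omega
      rw [e1, e2]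
      have hsgn : (-1:ℝ)^(N-i) * (-1:ℝ)^i = (-1:ℝ)^N := by
        rw [← pow_add]; congr 1; omega
      calc (-1:ℝ)^(N-i) * Ring.choose α (N-i) * ((-1:ℝ)^i * Ring.choose (-α) i)
          = ((-1:ℝ)^(N-i) * (-1:ℝ)^i) * (Ring.choose α (N-i) * Ring.choose (-α) i) := by ring
        _ = _ := by rw [hsgn]
    rw [Finset.sum_congr rfl step, ← Finset.mul_sum]
    have reflect : ∑ i ∈ Finset.range (N+1), Ring.choose α (N - i) * Ring.choose (-α) i
        = ∑ i ∈ Finset.range (N+1), Ring.choose α i * Ring.choose (-α) (N - i) := by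
      rw [← Finset.sum_range_reflect]
      apply Finset.sum_congr rfl
      intro i hi
      rw [Finset.mem_range] at hi
      have e1 : N - (N + 1 - 1 - i) = i := by omega
      have e2 : N + 1 - 1 - i = N - i := by omega
      rw [e1, e2]
    rw [reflect, vandermonde_zero]
    by_cases hN0 : N = 0
    · have : m = n := by omega
      simp [this, hN0]
    · have : ¬ (m = n) := by omega
      simp [this, hN0]

lemma fracDeltaSeq_sub (α : ℝ) (x y : ℕ → ℝ) (j : ℕ) :
    fracDeltaSeq α (x - y) j = fracDeltaSeq α x j - fracDeltaSeq α y j := by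
  unfold fracDeltaSeq
  rw [← Finset.sum_sub_distrib]
  apply Finset.sum_congr rfl
  intro k _
  simp [Pi.sub_apply, mul_sub]

lemma fracDeltaSeq_partial (α : ℝ) (hα : ∀ m : ℤ, α ≠ (m : ℝ)) (x l : ℕ → ℝ) (m j : ℕ) :
    fracDeltaSeq α (x - fun j => ∑ n ∈ Finset.range m, l n * cBasis α n j) j
      = fracDeltaSeq α x j - (if j < m then l j else 0) := by
  rw [fracDeltaSeq_sub]
  congr 1
  have h1 : fracDeltaSeq α (fun j => ∑ n ∈ Finset.range m, l n * cBasis α n j) j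
      = ∑ n ∈ Finset.range m, l n * fracDeltaSeq α (cBasis α n) j := by
    unfold fracDeltaSeq
    calc ∑ k ∈ Finset.range (j+1), fracDelta α j k * ∑ n ∈ Finset.range m, l n * cBasis α n k
        = ∑ k ∈ Finset.range (j+1), ∑ n ∈ Finset.range m,
            fracDelta α j k * (l n * cBasis α n k) := by
          apply Finset.sum_congr rfl; intro k _; rw [Finset.mul_sum]
      _ = ∑ n ∈ Finset.range m, ∑ k ∈ Finset.range (j+1),
            fracDelta α j k * (l n * cBasis α n k) := Finset.sum_comm
      _ = ∑ n ∈ Finset.range m, l n * ∑ k ∈ Finset.range (j+1),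
            fracDelta α j k * cBasis α n k := by
          apply Finset.sum_congr rfl; intro n _
          rw [Finset.mul_sum]; apply Finset.sum_congr rfl; intro k _; ring
  rw [h1]
  have h2 : ∀ n ∈ Finset.range m, l n * fracDeltaSeq α (cBasis α n) j
      = if j = n then l n else 0 := by
    intro n _
    rw [delta_cBasis α hα]
    by_cases h : j = n <;> simp [h]
  rw [Finset.sum_congr rfl h2, Finset.sum_ite_eq]
  simp [Finset.mem_range]

/-- `(c^{(n)})_{n=0}^∞` is a Schauder basis of `c₀(Δ^(α))`, and every
`x ∈ c₀(Δ^(α))` has the unique representation `x = ∑_n (Δ^(α)x)_n c^{(n)}`. -/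
theorem schauder_basis_c0Delta (α : ℝ) (hα : ∀ m : ℤ, α ≠ (m : ℝ)) :
    (∀ n : ℕ, memC0Delta α (fun k => cBasis α n k)) ∧
    ∀ x : ℕ → ℝ, memC0Delta α x →
      (Tendsto
        (fun m => deltaNorm α (x - fun j => ∑ n ∈ Finset.range m, fracDeltaSeq α x n * cBasis α n j))
        atTop (nhds 0)) ∧
      (∀ l : ℕ → ℝ,
        Tendsto
          (fun m => deltaNorm α (x - fun j => ∑ n ∈ Finset.range m, l n * cBasis α n j))
          atTop (nhds 0) →
        l = fun n => fracDeltaSeq α x n) := by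
  have key := fracDeltaSeq_partial α hα
  constructor
  · intro n
    unfold memC0Delta
    have heq : (fun m => (0:ℝ)) =ᶠ[atTop] fracDeltaSeq α (fun k => cBasis α n k) := by
      filter_upwards [eventually_ge_atTop (n+1)] with m hm
      have : fracDeltaSeq α (cBasis α n) m = if m = n then 1 else 0 := delta_cBasis α hα n m
      have hmn : ¬ (m = n) := by omega
      simpa [hmn] using this.symm
    exact Tendsto.congr' heq tendsto_const_nhds
  · intro x hx
    have hd := hx
    unfold memC0Delta at hd
    constructor
    · -- convergence of the canonical expansion
      rw [Metric.tendsto_atTop]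
      intro ε hε
      rw [Metric.tendsto_atTop] at hd
      obtain ⟨M, hM⟩ := hd (ε/2) (by linarith)
      refine ⟨M, fun m hm => ?_⟩
      have hbound : ∀ j, |fracDeltaSeq α
          (x - fun j => ∑ n ∈ Finset.range m, fracDeltaSeq α x n * cBasis α n j) j| ≤ ε/2 := by
        intro j
        rw [key x (fun n => fracDeltaSeq α x n) m j]
        by_cases hj : j < m
        · simp [hj]
          positivity
        · rw [if_neg hj, sub_zero]
          have hjM : j ≥ M := by omega
          have := hM j hjM
          rw [Real.dist_eq, sub_zero] at this
          linarith
      have hsup : deltaNorm α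
          (x - fun j => ∑ n ∈ Finset.range m, fracDeltaSeq α x n * cBasis α n j) ≤ ε/2 :=
        ciSup_le hbound
      have hnn : 0 ≤ deltaNorm α
          (x - fun j => ∑ n ∈ Finset.range m, fracDeltaSeq α x n * cBasis α n j) :=
        Real.iSup_nonneg (fun j => abs_nonneg _)
      rw [Real.dist_eq, sub_zero, abs_of_nonneg hnn]
      linarith
    · -- uniqueness
      intro l hl
      have habs : Tendsto (fun j => |fracDeltaSeq α x j|) atTop (nhds 0) := by
        have := hd.abs
        simpa using this
      obtain ⟨C, hC⟩ := habs.bddAbove_range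
      simp only [upperBounds, Set.mem_range, Set.mem_setOf_eq] at hC
      have hCb : ∀ j, |fracDeltaSeq α x j| ≤ C := fun j => hC ⟨j, rfl⟩
      funext n
      have hle : ∀ m, n < m → |fracDeltaSeq α x n - l n| ≤
          deltaNorm α (x - fun j => ∑ n ∈ Finset.range m, l n * cBasis α n j) := by
        intro m hm
        have hbdd : BddAbove (Set.range fun j =>
            |fracDeltaSeq α (x - fun j => ∑ n ∈ Finset.range m, l n * cBasis α n j) j|) := by
          refine ⟨C + ∑ i ∈ Finset.range m, |l i|, ?_⟩
          rintro _ ⟨j, rfl⟩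
          dsimp only
          rw [key x l m j]
          have h1 : |fracDeltaSeq α x j - (if j < m then l j else 0)|
              ≤ |fracDeltaSeq α x j| + |(if j < m then l j else 0)| := abs_sub _ _
          have h2 : |(if j < m then l j else 0)| ≤ ∑ i ∈ Finset.range m, |l i| := by
            by_cases hj : j < m
            · rw [if_pos hj]
              exact Finset.single_le_sum (f := fun i => |l i|)
                (fun i _ => abs_nonneg _) (Finset.mem_range.mpr hj)
            · rw [if_neg hj, abs_zero]
              exact Finset.sum_nonneg fun i _ => abs_nonneg _
          have := hCb j
          linarith
        have := le_ciSup hbdd n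
        rw [key x l m n, if_pos hm] at this
        exact this
      have hle0 : |fracDeltaSeq α x n - l n| ≤ 0 := by
        refine ge_of_tendsto hl ?_
        filter_upwards [eventually_gt_atTop n] with m hm
        exact hle m hm
      have : fracDeltaSeq α x n - l n = 0 :=
        abs_nonpos_iff.mp hle0
      linarith
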